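/- For every prime p and all natural numbers d, d', s with d' ≤ d, there exists a natural number h = h_1(d, d', p, s) with the following property. Let K be an algebraically closed field of characteristic 0 equipped with a multiplicative valuation v (taking values in a linearly ordered commutative group with zero) of mixed characteristic (0, p), i.e. 0 < v(p) < 1. Let Q(x) ∈ K[x] be a monic polynomial of degree d with roots α_1, …, α_d listed with multiplicity. If v(Q(p^i)) ≤ v(p)^{i·d'} for every integer i with 1 ≤ i ≤ h, then at least d' of the roots α_j (counted with multiplicity) satisfy v(α_j) ≤ v(p)^s. -/

import Mathlib

open scoped Classical

/-- For every prime `p` and naturals `d' ≤ d` and `s`, there is `h = h₁(d,d',p,s)`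
such that: for every algebraically closed valued field `K` of mixed
characteristic `(0, p)` (i.e. `char K = 0` and `0 < v(p) < 1`, with `v` a
multiplicative valuation into a linearly ordered commutative group with zero),
and every monic polynomial `Q ∈ K[x]` of degree `d`, if
`v(Q(pⁱ)) ≤ v(p)^(i·d')` for all `1 ≤ i ≤ h`, then at least `d'` of the roots
`α` of `Q` (counted with multiplicity) satisfy `v(α) ≤ v(p)^s`. -/
theorem stmt1 (p : ℕ) (hp : p.Prime) (d d' s : ℕ) (hd : d' ≤ d) :
    ∃ h : ℕ, ∀ (K : Type) [Field K] [IsAlgClosed K] [CharZero K]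
      (Γ₀ : Type) [LinearOrderedCommGroupWithZero Γ₀] (v : Valuation K Γ₀),
      0 < v (p : K) → v (p : K) < 1 →
      ∀ Q : Polynomial K, Q.Monic → Q.natDegree = d →
      (∀ i : ℕ, 1 ≤ i → i ≤ h → v (Q.eval ((p : K) ^ i)) ≤ v (p : K) ^ (i * d')) →
      d' ≤ Multiset.card (Q.roots.filter (fun α => v α ≤ v (p : K) ^ s)) := by
  refine ⟨s * d + d + 1, ?_⟩
  intro K _ _ _ Γ₀ _ v hv0 hv1 Q hmon hdeg hval
  by_contra hcon
  push_neg at hcon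
  set π : Γ₀ := v (p : K) with hπ
  have hd'1 : 1 ≤ d' := by omega
  have hd1 : 1 ≤ d := le_trans hd'1 hd
  -- roots
  have hsplits : Q.Splits := IsAlgClosed.splits Q
  have hroots : Multiset.card Q.roots = d := by
    have := (Polynomial.Splits.natDegree_eq_card_roots hsplits).symm
    rwa [hdeg] at this
  -- key uniqueness: each root can be "too close" to p^i for at most one i
  have key : ∀ α : K, ∀ i j : ℕ, i < j → v ((p : K) ^ i - α) < π ^ i →
      v ((p : K) ^ j - α) < π ^ j → False := by
    intro α i j hij h1 h2
    have hpij : v ((p : K) ^ i - (p : K) ^ j) = π ^ i := by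
      have hfac : (p : K) ^ i - (p : K) ^ j = (p : K) ^ i * (1 - (p : K) ^ (j - i)) := by
        rw [mul_sub, mul_one, ← pow_add, Nat.add_sub_cancel' hij.le]
      have hlt1 : v ((p : K) ^ (j - i)) < 1 := by
        rw [v.map_pow]
        exact pow_lt_one₀ hv0.le hv1 (by omega)
      rw [hfac, v.map_mul, v.map_pow, Valuation.map_one_sub_of_lt v hlt1, mul_one]
    have heq : ((p : K) ^ i - α) - ((p : K) ^ j - α) = (p : K) ^ i - (p : K) ^ j := by ring
    have hle := v.map_sub ((p : K) ^ i - α) ((p : K) ^ j - α)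
    rw [heq, hpij] at hle
    have hji : π ^ j ≤ π ^ i :=
      Bound.pow_le_pow_right_of_le_one_or_one_le (Or.inr ⟨hv0.le, hv1.le, hij.le⟩)
    have : π ^ i < π ^ i :=
      lt_of_le_of_lt hle (max_lt (lt_of_lt_of_le h1 le_rfl) (lt_of_lt_of_le h2 hji))
    exact lt_irrefl _ this
  -- choose a good exponent i
  set C : Finset ℕ := Finset.Icc (s * d + 1) (s * d + d + 1) with hC
  have hCcard : C.card = d + 1 := by
    rw [hC, Nat.card_Icc]; omega
  set U : Finset ℕ := Q.roots.toFinset.biUnion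
    (fun α => C.filter (fun i => v ((p : K) ^ i - α) < π ^ i)) with hU
  have hUcard : U.card ≤ d := by
    calc U.card ≤ ∑ α ∈ Q.roots.toFinset, (C.filter (fun i => v ((p : K) ^ i - α) < π ^ i)).card :=
          Finset.card_biUnion_le
      _ ≤ ∑ _α ∈ Q.roots.toFinset, 1 := by
          refine Finset.sum_le_sum ?_
          intro α _
          refine Finset.card_le_one.mpr ?_
          intro a ha b hb
          rcases Finset.mem_filter.mp ha with ⟨-, ha2⟩
          rcases Finset.mem_filter.mp hb with ⟨-, hb2⟩
          rcases lt_trichotomy a b with h | h | h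
          · exact absurd (key α a b h ha2 hb2) (by simp)
          · exact h
          · exact absurd (key α b a h hb2 ha2) (by simp)
      _ = Q.roots.toFinset.card := by simp
      _ ≤ Multiset.card Q.roots := Multiset.toFinset_card_le _
      _ = d := hroots
  have hex : ∃ i ∈ C, i ∉ U := by
    by_contra h
    push_neg at h
    have hsub : C ⊆ U := fun i hi => h i hi
    have := Finset.card_le_card hsub
    omega
  obtain ⟨i, hiC, hiU⟩ := hex
  obtain ⟨hi1, hi2⟩ := Finset.mem_Icc.mp hiC
  -- the good i gives lower bounds on all factors
  have hgood : ∀ α ∈ Q.roots, π ^ i ≤ v ((p : K) ^ i - α) := by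
    intro α hα
    by_contra hlt
    push_neg at hlt
    exact hiU (Finset.mem_biUnion.mpr ⟨α, Multiset.mem_toFinset.mpr hα,
      Finset.mem_filter.mpr ⟨hiC, hlt⟩⟩)
  have his : s ≤ i := by nlinarith
  have hpis : π ^ i ≤ π ^ s :=
    Bound.pow_le_pow_right_of_le_one_or_one_le (Or.inr ⟨hv0.le, hv1.le, his⟩)
  have hbig : ∀ α ∈ Q.roots, ¬ v α ≤ π ^ s → π ^ s ≤ v ((p : K) ^ i - α) := by
    intro α hα hns
    push_neg at hns
    have hsub := v.map_sub ((p : K) ^ i) ((p : K) ^ i - α)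
    have heq : (p : K) ^ i - ((p : K) ^ i - α) = α := by ring
    rw [heq] at hsub
    have hvp : v ((p : K) ^ i) = π ^ i := by rw [v.map_pow]
    rcases max_cases (v ((p : K) ^ i)) (v ((p : K) ^ i - α)) with ⟨hm, _⟩ | ⟨hm, _⟩
    · exfalso
      rw [hm, hvp] at hsub
      exact absurd (lt_of_lt_of_le hns (le_trans hsub hpis)) (lt_irrefl _)
    · rw [hm] at hsub
      exact le_trans hns.le hsub
  -- value of Q at p^i as a product over roots
  have hQ : Q = (Q.roots.map (fun a => Polynomial.X - Polynomial.C a)).prod :=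
    Polynomial.Splits.eq_prod_roots_of_monic hsplits hmon
  have hevalQ : v (Q.eval ((p : K) ^ i)) =
      (Q.roots.map (fun a => v ((p : K) ^ i - a))).prod := by
    conv_lhs => rw [hQ]
    rw [Polynomial.eval_multiset_prod, map_multiset_prod]
    simp [Multiset.map_map, Function.comp]
  -- split roots into small and big parts
  set T : Multiset K := Q.roots.filter (fun α => v α ≤ π ^ s) with hT
  set B : Multiset K := Q.roots.filter (fun α => ¬ v α ≤ π ^ s) with hB
  have hTB : T + B = Q.roots := Multiset.filter_add_not _ _
  set cT : ℕ := Multiset.card T with hcT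
  set cB : ℕ := Multiset.card B with hcB
  have hcard : cT + cB = d := by
    rw [hcT, hcB, ← Multiset.card_add, hTB, hroots]
  have hcTd' : cT < d' := hcon
  -- lower bound the product
  set g : K → Γ₀ := fun α => if v α ≤ π ^ s then π ^ i else π ^ s with hg
  have hglb : (Q.roots.map g).prod ≤ (Q.roots.map (fun a => v ((p : K) ^ i - a))).prod := by
    refine Multiset.prod_map_le_prod_map₀ g _ ?_ ?_
    · intro a _; exact zero_le'
    · intro a ha
      by_cases hca : v a ≤ π ^ s
      · simpa [hg, hca] using hgood a ha
      · simpa [hg, hca] using hbig a ha hca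
  have hprodg : (Q.roots.map g).prod = π ^ (i * cT + s * cB) := by
    rw [← hTB, Multiset.map_add, Multiset.prod_add]
    have h1 : Multiset.map g T = Multiset.replicate cT (π ^ i) := by
      rw [Multiset.eq_replicate]
      constructor
      · rw [Multiset.card_map]
      · intro b hb
        rcases Multiset.mem_map.mp hb with ⟨a, ha, rfl⟩
        have := Multiset.of_mem_filter ha
        simp [hg, this]
    have h2 : Multiset.map g B = Multiset.replicate cB (π ^ s) := by
      rw [Multiset.eq_replicate]
      constructor
      · rw [Multiset.card_map]
      · intro b hb
        rcases Multiset.mem_map.mp hb with ⟨a, ha, rfl⟩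
        have := Multiset.of_mem_filter ha
        simp [hg, this]
    rw [h1, h2, Multiset.prod_replicate, Multiset.prod_replicate, ← pow_mul, ← pow_mul,
      ← pow_add]
  -- exponent comparison
  have hexp : i * cT + s * cB < i * d' := by
    have h1 : cT ≤ d' - 1 := by omega
    have h2 : cB ≤ d := by omega
    have h3 : i * cT ≤ i * (d' - 1) := Nat.mul_le_mul_left i h1
    have h4 : s * cB ≤ s * d := Nat.mul_le_mul_left s h2
    have h5 : i * (d' - 1) + i = i * d' := by
      have : d' - 1 + 1 = d' := by omega
      rw [← this, Nat.mul_add, Nat.mul_one, this]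
    omega
  have hlt : π ^ (i * d') < π ^ (i * cT + s * cB) :=
    pow_lt_pow_right_of_lt_one₀ hv0 hv1 hexp
  have hfinal : π ^ (i * cT + s * cB) ≤ π ^ (i * d') := by
    calc π ^ (i * cT + s * cB) = (Q.roots.map g).prod := hprodg.symm
      _ ≤ (Q.roots.map (fun a => v ((p : K) ^ i - a))).prod := hglb
      _ = v (Q.eval ((p : K) ^ i)) := hevalQ.symm
      _ ≤ π ^ (i * d') := hval i (by omega) (by omega)
  exact absurd (lt_of_lt_of_le hlt hfinal) (lt_irrefl _)
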